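/- Let B be a Garside shadow in (W,S). Then for every g ∈ W, the language L_g is nonempty and finite, and every word v ∈ L_g has word length equal to ℓ(g) and represents g; consequently, V_B is a geodesic language and every element of W is represented by some word of V_B. -/

import Mathlib

open CoxeterSystem

variable {ι W : Type} [Group W] {cm : CoxeterMatrix ι}

/-- The right weak order on `W`: `g ⪯ h` iff `ℓ(g) + ℓ(g⁻¹h) = ℓ(h)`. -/
def WLe (cs : CoxeterSystem cm W) (g h : W) : Prop :=
  cs.length g + cs.length (g⁻¹ * h) = cs.length h

/-- `w` is a suffix of `g` if `g = u * w` with `ℓ(g) = ℓ(u) + ℓ(w)`. -/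
def IsSuffixOf (cs : CoxeterSystem cm W) (w g : W) : Prop :=
  ∃ u : W, g = u * w ∧ cs.length g = cs.length u + cs.length w

/-- `j` is the join (least upper bound) of `X` with respect to the right weak order. -/
def IsJoin (cs : CoxeterSystem cm W) (X : Set W) (j : W) : Prop :=
  (∀ x ∈ X, WLe cs x j) ∧ ∀ u : W, (∀ x ∈ X, WLe cs x u) → WLe cs j u

/-- A Garside shadow: a subset of `W` containing all simple reflections, closed under
existing joins and under taking suffixes. -/
def IsGarsideShadow (cs : CoxeterSystem cm W) (B : Set W) : Prop :=
  (∀ i : ι, cs.simple i ∈ B) ∧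
  (∀ X : Set W, X ⊆ B → ∀ j : W, IsJoin cs X j → j ∈ B) ∧
  (∀ b ∈ B, ∀ w : W, IsSuffixOf cs w b → w ∈ B)

/-- `π` is the `B`-projection: `π g` is the join of `{b ∈ B : b ⪯ g}` and lies in `B`. -/
def IsGarsideProjection (cs : CoxeterSystem cm W) (B : Set W) (π : W → W) : Prop :=
  ∀ g : W, π g ∈ B ∧ IsJoin cs {b : W | b ∈ B ∧ WLe cs b g} (π g)

/-- The voracious projection with respect to `π = π_B`: `ν_B(g) = g · π_B(g⁻¹)`. -/
def vor (π : W → W) (g : W) : W := g * π g⁻¹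

/-- The language `L_g`, defined inductively: `L_id = {ε}` and
`L_g = {uv : u ∈ L_{ν_B(g)}, v a minimal length word representing ν_B(g)⁻¹g}`. -/
inductive VorL (cs : CoxeterSystem cm W) (π : W → W) : W → List ι → Prop
  | nil : VorL cs π 1 []
  | step {g : W} {u v : List ι} (hg : g ≠ 1) (hu : VorL cs π (vor π g) u)
      (hv : cs.wordProd v = (vor π g)⁻¹ * g)
      (hmin : v.length = cs.length ((vor π g)⁻¹ * g)) :
      VorL cs π g (u ++ v)

/-- The voracious language `V_B = ⋃_{g ∈ W} L_g`. -/
def VorLang (cs : CoxeterSystem cm W) (π : W → W) : Language ι :=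
  {v : List ι | ∃ g : W, VorL cs π g v}

/-- The reflection `r` separates `g` from `h`. -/
def SepElem (cs : CoxeterSystem cm W) (r g h : W) : Prop :=
  Xor' (cs.length (r * g) < cs.length g) (cs.length (r * h) < cs.length h)

/-- The reflection `r'` separates `g` from the wall of the reflection `r`. -/
def SepWall (cs : CoxeterSystem cm W) (r' g r : W) : Prop :=
  ∀ h : W, (∃ i : ι, r * h = h * cs.simple i) → SepElem cs r' g h

/-- The wall of the reflection `r` is `m`-close to `g`: at most `m` reflections
separate `g` from the wall of `r`. -/
def MClose (cs : CoxeterSystem cm W) (m : ℕ) (g r : W) : Prop :=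
  ∃ F : Finset W, F.card ≤ m ∧
    ∀ r' : W, cs.IsReflection r' → SepWall cs r' g r → r' ∈ F



private lemma exists_simple_wle (cs : CoxeterSystem cm W) {g : W} (hg : g ≠ 1) :
    ∃ i : ι, WLe cs (cs.simple i) g := by
  obtain ⟨ω, hlen, rfl⟩ := cs.exists_reduced_word g
  cases ω with
  | nil => simp at hg
  | cons i ω' =>
    refine ⟨i, ?_⟩
    unfold WLe
    rw [cs.length_simple, cs.inv_simple, cs.wordProd_cons, ← mul_assoc,
      cs.simple_mul_simple_self, one_mul]
    have h1 : cs.length (cs.wordProd ω') ≤ ω'.length := cs.length_wordProd_le ω'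
    have h2 : cs.length (cs.simple i * cs.wordProd ω') ≤ 1 + cs.length (cs.wordProd ω') := by
      have := cs.length_mul_le (cs.simple i) (cs.wordProd ω')
      rwa [cs.length_simple] at this
    unfold CoxeterSystem.IsReduced at hlen
    rw [cs.wordProd_cons] at hlen
    simp only [List.length_cons] at hlen
    omega

private lemma vor_key (cs : CoxeterSystem cm W) (B : Set W) (hB : IsGarsideShadow cs B)
    (piB : W → W) (hpi : IsGarsideProjection cs B piB) {g : W} (hg : g ≠ 1) :
    cs.length (vor piB g) + cs.length ((vor piB g)⁻¹ * g) = cs.length g ∧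
      cs.length (vor piB g) < cs.length g := by
  obtain ⟨hpB, hjoin⟩ := hpi g⁻¹
  set p := piB g⁻¹ with hp
  have hple : WLe cs p g⁻¹ := hjoin.2 g⁻¹ (fun x hx => hx.2)
  obtain ⟨i, hi⟩ := exists_simple_wle cs (show g⁻¹ ≠ 1 from inv_ne_one.mpr hg)
  have hsimp : WLe cs (cs.simple i) p := hjoin.1 _ ⟨hB.1 i, hi⟩
  have hp1 : 1 ≤ cs.length p := by
    unfold WLe at hsimp; rw [cs.length_simple] at hsimp; omega
  have e1 : (vor piB g)⁻¹ * g = p⁻¹ := by unfold vor; rw [← hp]; group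
  have e2 : (vor piB g)⁻¹ = p⁻¹ * g⁻¹ := by unfold vor; rw [← hp]; group
  have l1 : cs.length (vor piB g) = cs.length (p⁻¹ * g⁻¹) := by
    rw [← cs.length_inv, e2]
  have l2 : cs.length ((vor piB g)⁻¹ * g) = cs.length p := by
    rw [e1, cs.length_inv]
  unfold WLe at hple
  rw [cs.length_inv g] at hple
  constructor <;> omega

/-- For every `g ∈ W`, the language `L_g` is nonempty and finite, and
every word of `L_g` has length `ℓ(g)` and represents `g`; consequently `V_B` is a geodesic
language and every element of `W` is represented by a word of `V_B`. -/
theorem vorLang_geodesic [Finite ι] (cs : CoxeterSystem cm W)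
    (B : Set W) (hB : IsGarsideShadow cs B)
    (piB : W → W) (hpi : IsGarsideProjection cs B piB) :
    (∀ g : W, {v : List ι | VorL cs piB g v}.Nonempty ∧
      {v : List ι | VorL cs piB g v}.Finite ∧
      ∀ v : List ι, VorL cs piB g v → cs.wordProd v = g ∧ v.length = cs.length g) ∧
    (∀ v ∈ VorLang cs piB, v.length = cs.length (cs.wordProd v)) ∧
    (∀ g : W, ∃ v ∈ VorLang cs piB, cs.wordProd v = g) := by
  have corr : ∀ g : W, ∀ v : List ι, VorL cs piB g v →
      cs.wordProd v = g ∧ v.length = cs.length g := by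
    intro g v h
    induction h with
    | nil => simp
    | step hg hu hv hmin ih =>
      obtain ⟨key1, _⟩ := vor_key cs B hB piB hpi hg
      constructor
      · rw [cs.wordProd_append, ih.1, hv]; group
      · rw [List.length_append, ih.2, hmin, key1]
  have ne : ∀ n : ℕ, ∀ g : W, cs.length g = n → ∃ v, VorL cs piB g v := by
    intro n
    induction n using Nat.strong_induction_on with
    | _ n ih =>
      intro g hn
      by_cases hg : g = 1
      · exact ⟨[], hg ▸ VorL.nil⟩
      · obtain ⟨k1, k2⟩ := vor_key cs B hB piB hpi hg
        obtain ⟨u, hu⟩ := ih (cs.length (vor piB g)) (hn ▸ k2) (vor piB g) rfl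
        obtain ⟨v, hvl, hvp⟩ := cs.exists_reduced_word ((vor piB g)⁻¹ * g)
        exact ⟨u ++ v, VorL.step hg hu hvp.symm (by rw [hvp]; exact hvl.symm)⟩
  refine ⟨fun g => ⟨ne _ g rfl, ?_, fun v hv => corr g v hv⟩, ?_, ?_⟩
  · exact (List.finite_length_eq ι (cs.length g)).subset
      (fun v hv => (corr g v hv).2)
  · rintro v ⟨g, hg⟩
    obtain ⟨h1, h2⟩ := corr g v hg
    rw [h1, h2]
  · intro g
    obtain ⟨v, hv⟩ := ne _ g rfl
    exact ⟨v, ⟨g, hv⟩, (corr g v hv).1⟩
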